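/- arXiv:2502.17102 — 3 statements merged into one kernel-verified Lean document; each statement's English description precedes it below -/
import Mathlib

section
/- Let K be an algebraically closed field of characteristic p > 0, let n be a positive integer and let ζ ∈ K[[t]] be a nonzero power series satisfying the minimality condition with respect to n. Then the set { rescale_ρ ζ : ρ ∈ U_n } has exactly n[:p] elements; equivalently, the map ρ ↦ rescale_ρ ζ is injective on U_n. -/
open scoped Classical

noncomputable section

namespace PaperStmt

/-- The formal partial derivative `∂_i f` of a formal power series in two variables:
its coefficient at a monomial `m` is `(m i + 1)` times the coefficient of `f` at
`m + eᵢ`. -/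
def pderiv (K : Type*) [Field K] (i : Fin 2) (f : MvPowerSeries (Fin 2) K) :
    MvPowerSeries (Fin 2) K :=
  fun m => ((m i + 1 : ℕ) : K) * MvPowerSeries.coeff (m + Finsupp.single i 1) f

/-- The intersection number `I(f,g) := dim_K K[[X,Y]]/(f,g)`. -/
def inum (K : Type*) [Field K] (f g : MvPowerSeries (Fin 2) K) : ℕ :=
  Module.finrank K (MvPowerSeries (Fin 2) K ⧸ Ideal.span {f, g})

/-- The Milnor number `μ(f) := dim_K K[[X,Y]]/(∂_X f, ∂_Y f)`. -/
def milnor (K : Type*) [Field K] (f : MvPowerSeries (Fin 2) K) : ℕ :=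
  inum K (pderiv K 0 f) (pderiv K 1 f)

/-- `ζ ∈ K[[t]]` satisfies the minimality condition with respect to `n`: the only
positive integer dividing both `n` and every element of the support of `ζ` is `1`. -/
def MinimalDenom (K : Type*) [Field K] (n : ℕ) (ζ : PowerSeries K) : Prop :=
  ∀ d : ℕ, d ∣ n → (∀ j : ℕ, PowerSeries.coeff j ζ ≠ 0 → d ∣ j) → d = 1

/-- `b`, `e` are the characteristic data of `ζ` with respect to `n`, with `h` steps:
`e 0 = n`, `b 0 = 0`, for `j < h` the number `b (j+1)` is the least element of the
support of `ζ` not divisible by `e j` and `e (j+1) = gcd (e j) (b (j+1))`;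
the process stops exactly at `h`, i.e. `e h = 1` and `e j ≠ 1` for `j < h`. -/
def CharData (K : Type*) [Field K] (n : ℕ) (ζ : PowerSeries K) (h : ℕ)
    (b e : ℕ → ℕ) : Prop :=
  e 0 = n ∧ b 0 = 0 ∧ (∀ j, j < h → e j ≠ 1) ∧ e h = 1 ∧
  (∀ j, j < h →
    IsLeast {k : ℕ | PowerSeries.coeff k ζ ≠ 0 ∧ ¬ e j ∣ k} (b (j + 1))) ∧
  (∀ j, j < h → e (j + 1) = Nat.gcd (e j) (b (j + 1)))

/-- `expandPS K n φ = φ(t^n)`: the image of `φ` under the (continuous) `K`-algebra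
homomorphism `K[[x]] → K[[t]]` sending `x` to `t^n`. -/
def expandPS (K : Type*) [Field K] (n : ℕ) (φ : PowerSeries K) : PowerSeries K :=
  PowerSeries.mk fun j => if n ∣ j then PowerSeries.coeff (j / n) φ else 0

/-- A polynomial in `Y` with coefficients in `K[[X]]`, viewed as an element
of `K[[X,Y]]`. -/
def polyToMv (K : Type*) [Field K] (q : Polynomial (PowerSeries K)) :
    MvPowerSeries (Fin 2) K :=
  fun m => PowerSeries.coeff (m 0) (q.coeff (m 1))

/-- `f(t^n, ζ(t)) = 0`: the series `ζ` is a root of the polynomial obtained from `f`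
by mapping its coefficients through the `K`-algebra homomorphism `K[[x]] → K[[t]]`
sending `x` to `t^n`. -/
def IsNPRoot (K : Type*) [Field K] (n : ℕ) (f : Polynomial (PowerSeries K))
    (ζ : PowerSeries K) : Prop :=
  ∑ i ∈ Finset.range (f.natDegree + 1), expandPS K n (f.coeff i) * ζ ^ i = 0

/-- `nuFun K n ζ H = H(t^n, ζ(t))`: the image of `H ∈ K[[X,Y]]` under the continuous
`K`-algebra homomorphism `K[[X,Y]] → K[[t]]` sending `X ↦ t^n` and `Y ↦ ζ(t)`
(for `1 ≤ n` and `ζ(0) = 0`). -/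
def nuFun (K : Type*) [Field K] (n : ℕ) (ζ : PowerSeries K)
    (H : MvPowerSeries (Fin 2) K) : PowerSeries K :=
  PowerSeries.mk fun k =>
    ∑ a ∈ Finset.range (k + 1), ∑ c ∈ Finset.range (k + 1),
      if n * a ≤ k then
        MvPowerSeries.coeff (Finsupp.single 0 a + Finsupp.single 1 c) H *
          PowerSeries.coeff (k - n * a) (ζ ^ c)
      else 0

/-- `n[:p] = n · p^{-ν_p(n)}`, the part of `n` coprime to `p`. -/
def coprimePart (p n : ℕ) : ℕ := n / p ^ padicValNat p n

/-- In characteristic `p > 0`, a nonzero `ζ ∈ K[[t]]` satisfying the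
minimality condition with respect to `n` has exactly `n[:p]` distinct conjugates
`ζ(ρt)` for `ρ` ranging over the `n`-th roots of unity. -/
theorem statement9 (K : Type*) [Field K] [IsAlgClosed K]
    (p : ℕ) [Fact p.Prime] [CharP K p]
    (n : ℕ) (hn : 0 < n)
    (ζ : PowerSeries K) (hζ : ζ ≠ 0) (hmin : MinimalDenom K n ζ) :
    Set.ncard ((fun ρ : K => PowerSeries.rescale ρ ζ) '' {ρ : K | ρ ^ n = 1}) =
      coprimePart p n := by
  classical
  have hp : p.Prime := Fact.out
  -- notation for the coprime part
  set ν := padicValNat p n with hν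
  have hfact : n.factorization p = ν := Nat.factorization_def n hp
  have hcp : coprimePart p n = n / p ^ n.factorization p := by
    rw [coprimePart, hfact]
  have hpos : 0 < coprimePart p n := by
    rw [hcp]; exact Nat.ordCompl_pos p hn.ne'
  have hndvd : ¬ p ∣ coprimePart p n := by
    rw [hcp]; exact Nat.not_dvd_ordCompl hp hn.ne'
  have hsplit : p ^ n.factorization p * coprimePart p n = n := by
    rw [hcp]; exact Nat.ordProj_mul_ordCompl_eq_self n p
  set m := coprimePart p n with hm
  -- the set of n-th roots of unity equals the set of m-th roots of unity
  have hsets : {ρ : K | ρ ^ n = 1} = {ρ : K | ρ ^ m = 1} := by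
    ext ρ
    simp only [Set.mem_setOf_eq]
    constructor
    · intro h
      have h' : (ρ ^ m - 1) ^ p ^ n.factorization p = 0 := by
        rw [sub_pow_char_pow, ← pow_mul, Nat.mul_comm, hsplit, h, one_pow, sub_self]
      have := pow_eq_zero_iff (n := p ^ n.factorization p)
        (pow_ne_zero _ hp.pos.ne') |>.mp h'
      exact sub_eq_zero.mp this
    · intro h
      rw [← hsplit, Nat.mul_comm, pow_mul, h, one_pow]
  -- injectivity on the set of n-th roots of unity
  have hinj : Set.InjOn (fun ρ : K => PowerSeries.rescale ρ ζ) {ρ : K | ρ ^ n = 1} := by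
    intro ρ hρ σ hσ hrs
    simp only [Set.mem_setOf_eq] at hρ hσ
    have hσ0 : σ ≠ 0 := by
      intro h0; rw [h0, zero_pow hn.ne'] at hσ; exact zero_ne_one hσ
    set τ := ρ * σ⁻¹ with hτ
    have hτn : τ ^ n = 1 := by
      rw [hτ, mul_pow, inv_pow, hρ, hσ, inv_one, one_mul]
    have hτj : ∀ j : ℕ, PowerSeries.coeff j ζ ≠ 0 → τ ^ j = 1 := by
      intro j hj
      have hc := congrArg (PowerSeries.coeff j) hrs
      simp only [PowerSeries.coeff_rescale] at hc
      have hρσ : ρ ^ j = σ ^ j := by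
        exact mul_right_cancel₀ hj hc
      rw [hτ, mul_pow, inv_pow, hρσ, mul_inv_cancel₀ (pow_ne_zero _ hσ0)]
    have hd : orderOf τ = 1 := by
      refine hmin (orderOf τ) (orderOf_dvd_of_pow_eq_one hτn) ?_
      intro j hj
      exact orderOf_dvd_of_pow_eq_one (hτj j hj)
    have hτ1 : τ = 1 := orderOf_eq_one_iff.mp hd
    have : ρ = σ := by
      have := congrArg (· * σ) hτ1
      simpa [hτ, mul_assoc, inv_mul_cancel₀ hσ0] using this
    exact this
  rw [Set.ncard_image_of_injOn hinj, hsets]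
  -- count the m-th roots of unity
  have hm0 : (m : K) ≠ 0 := by
    rw [Ne, CharP.cast_eq_zero_iff K p]; exact hndvd
  have : NeZero (m : K) := ⟨hm0⟩
  obtain ⟨ω, hω⟩ := HasEnoughRootsOfUnity.exists_primitiveRoot K m
  have hset2 : {ρ : K | ρ ^ m = 1} = ↑(Polynomial.nthRootsFinset m (1 : K)) := by
    ext ρ
    simp [Polynomial.mem_nthRootsFinset hpos (1 : K)]
  rw [hset2, Set.ncard_coe_finset, hω.card_nthRootsFinset]


end PaperStmt
end
end

section
/- Let K be an algebraically closed field of characteristic p > 0, let n be a positive integer and let ζ ∈ K[[t]] be a nonzero power series satisfying the minimality condition with respect to n, with characteristic data b_j, e_j (1 ≤ j ≤ h). Then for every j ∈ {1,…,h}: (a) the number of ρ ∈ U_n with ord_t( rescale_ρ ζ − ζ ) ≥ b_j equals e_{j−1}[:p] (where ord_t 0 = ∞ is counted as ≥ b_j); (b) the number of ρ ∈ U_n with ord_t( rescale_ρ ζ − ζ ) = b_j equals e_{j−1}[:p] − e_j[:p]. -/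
open scoped Classical

noncomputable section

namespace PaperStmt

private lemma pow_gcd_eq_one {K : Type*} [Monoid K] {ρ : K} {a b : ℕ}
    (ha : ρ ^ a = 1) (hb : ρ ^ b = 1) : ρ ^ Nat.gcd a b = 1 := by
  rw [← orderOf_dvd_iff_pow_eq_one] at ha hb ⊢
  exact Nat.dvd_gcd ha hb

private lemma setOf_pow_eq_one_eq (K : Type*) [Field K] {m : ℕ} (hm : 0 < m) :
    {ρ : K | ρ ^ m = 1} = ↑(Polynomial.nthRoots m (1 : K)).toFinset := by
  ext x
  simp [Polynomial.mem_nthRoots hm]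

private lemma finite_setOf_pow_eq_one (K : Type*) [Field K] {m : ℕ} (hm : 0 < m) :
    ({ρ : K | ρ ^ m = 1}).Finite := by
  rw [setOf_pow_eq_one_eq K hm]
  exact (Polynomial.nthRoots m (1 : K)).toFinset.finite_toSet

private lemma card_rootsOfUnity (K : Type*) [Field K] [IsAlgClosed K]
    (p : ℕ) [Fact p.Prime] [CharP K p]
    {m : ℕ} (hm : 0 < m) (hpm : ¬ p ∣ m) : Set.ncard {ρ : K | ρ ^ m = 1} = m := by
  rw [setOf_pow_eq_one_eq K hm, Set.ncard_coe_finset]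
  have hmK : (m : K) ≠ 0 := by
    rwa [Ne, CharP.cast_eq_zero_iff K p m]
  have hsep : (Polynomial.X ^ m - Polynomial.C (1 : K)).Separable :=
    Polynomial.separable_X_pow_sub_C 1 hmK one_ne_zero
  have hsplit : (Polynomial.X ^ m - Polynomial.C (1 : K)).Splits :=
    IsAlgClosed.splits _
  rw [Polynomial.nthRoots,
    Multiset.toFinset_card_of_nodup (Polynomial.nodup_roots hsep)]
  have := hsplit.natDegree_eq_card_roots
  rw [← this, Polynomial.natDegree_X_pow_sub_C]

private lemma card_rootsOfUnity' (K : Type*) [Field K] [IsAlgClosed K]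
    (p : ℕ) [Fact p.Prime] [CharP K p]
    {m : ℕ} (hm : 0 < m) : Set.ncard {ρ : K | ρ ^ m = 1} = coprimePart p m := by
  have hp : p.Prime := Fact.out
  have hcp : coprimePart p m = ordCompl[p] m := by
    rw [coprimePart, Nat.factorization_def m hp]
  have hfac : m = coprimePart p m * p ^ padicValNat p m := by
    rw [hcp, ← Nat.factorization_def m hp, mul_comm, Nat.ordProj_mul_ordCompl_eq_self]
  have hm' : 0 < coprimePart p m := by
    rw [hcp]; exact Nat.ordCompl_pos p hm.ne'
  have hpm' : ¬ p ∣ coprimePart p m := by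
    rw [hcp]; exact Nat.not_dvd_ordCompl hp hm.ne'
  have hset : {ρ : K | ρ ^ m = 1} = {ρ : K | ρ ^ coprimePart p m = 1} := by
    ext ρ
    simp only [Set.mem_setOf_eq]
    constructor
    · intro h1
      have h2 : (ρ ^ coprimePart p m - 1) ^ p ^ padicValNat p m = 0 := by
        rw [sub_pow_char_pow, ← pow_mul, ← hfac, h1, one_pow, sub_self]
      have h3 : ρ ^ coprimePart p m - 1 = 0 :=
        pow_eq_zero_iff (pow_ne_zero _ hp.ne_zero) |>.mp h2
      exact sub_eq_zero.mp h3
    · intro h1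
      rw [hfac, pow_mul, h1, one_pow]
  rw [hset, card_rootsOfUnity K p hm' hpm']

/-- counting lemma. In characteristic `p > 0`, for `ζ` nonzero
satisfying the minimality condition with respect to `n`, with characteristic data
`b_j, e_j`, and for every `j ∈ {1,…,h}`:
(a) the number of `n`-th roots of unity `ρ` with `ord_t(ζ(ρt) − ζ(t)) ≥ b_j`
(with `ord_t 0 = ∞` counted as `≥ b_j`) is `e_{j−1}[:p]`;
(b) the number of those with `ord_t(ζ(ρt) − ζ(t)) = b_j` is `e_{j−1}[:p] − e_j[:p]`. -/
theorem statement13 (K : Type*) [Field K] [IsAlgClosed K]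
    (p : ℕ) [Fact p.Prime] [CharP K p]
    (n : ℕ) (hn : 0 < n)
    (ζ : PowerSeries K) (hζ : ζ ≠ 0) (hmin : MinimalDenom K n ζ)
    (h : ℕ) (b e : ℕ → ℕ) (hcd : CharData K n ζ h b e) :
    ∀ j, 1 ≤ j → j ≤ h →
      Set.ncard {ρ : K | ρ ^ n = 1 ∧
          (b j : ℕ∞) ≤ PowerSeries.order (PowerSeries.rescale ρ ζ - ζ)} =
        coprimePart p (e (j - 1)) ∧
      Set.ncard {ρ : K | ρ ^ n = 1 ∧
          PowerSeries.order (PowerSeries.rescale ρ ζ - ζ) = (b j : ℕ∞)} =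
        coprimePart p (e (j - 1)) - coprimePart p (e j) := by
  obtain ⟨he0, hb0, heh1, hehh, hleast, hgcd⟩ := hcd
  have hedvd : ∀ i, i ≤ h → e i ∣ n := by
    intro i
    induction i with
    | zero => intro _; rw [he0]
    | succ i ih =>
      intro hi
      rw [hgcd i (by omega)]
      exact (Nat.gcd_dvd_left _ _).trans (ih (by omega))
  have hepos : ∀ i, i ≤ h → 0 < e i := fun i hi =>
    Nat.pos_of_dvd_of_pos (hedvd i hi) hn
  have hbS : ∀ i, i < h →
      (PowerSeries.coeff (b (i + 1)) ζ ≠ 0 ∧ ¬ e i ∣ b (i + 1)) :=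
    fun i hi => (hleast i hi).1
  have hble : ∀ i, i < h → ∀ k, PowerSeries.coeff k ζ ≠ 0 → ¬ e i ∣ k →
      b (i + 1) ≤ k := fun i hi k h1 h2 => (hleast i hi).2 ⟨h1, h2⟩
  have hedvdb : ∀ i, i < h → e (i + 1) ∣ b (i + 1) := fun i hi => by
    rw [hgcd i hi]; exact Nat.gcd_dvd_right _ _
  have hedvde : ∀ i, i < h → e (i + 1) ∣ e i := fun i hi => by
    rw [hgcd i hi]; exact Nat.gcd_dvd_left _ _
  have hbadj : ∀ i, i + 1 < h → b (i + 1) < b (i + 2) := by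
    intro i hi
    have h12 : i + 1 + 1 = i + 2 := by omega
    have hS2 := hbS (i + 1) hi
    rw [h12] at hS2
    have hdvdb2 := hedvdb i (by omega)
    by_contra hle
    push_neg at hle
    have hne : b (i + 2) ≠ b (i + 1) := by
      intro heq
      exact hS2.2 (heq ▸ hdvdb2)
    have hlt : b (i + 2) < b (i + 1) := lt_of_le_of_ne hle hne
    have hdvd : e i ∣ b (i + 2) := by
      by_contra hnd
      exact absurd (hble i (by omega) _ hS2.1 hnd) (by omega)
    exact hS2.2 ((hedvde i (by omega)).trans hdvd)
  have hbmono : ∀ i i', i' < i → i < h → b (i' + 1) < b (i + 1) := by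
    intro i
    induction i with
    | zero => omega
    | succ i ih =>
      intro i' hlt hih
      rcases Nat.lt_succ_iff_lt_or_eq.mp hlt with h1 | rfl
      · exact (ih i' h1 (by omega)).trans (hbadj i (by omega))
      · exact hbadj i' (by omega)
  have hcoeff : ∀ (ρ : K) (k : ℕ),
      PowerSeries.coeff k (PowerSeries.rescale ρ ζ - ζ) =
        (ρ ^ k - 1) * PowerSeries.coeff k ζ := by
    intro ρ k
    rw [map_sub, PowerSeries.coeff_rescale]
    ring
  intro j hj1 hjh
  obtain ⟨i, rfl⟩ : ∃ i, j = i + 1 := ⟨j - 1, by omega⟩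
  have hih : i < h := by omega
  have key : ∀ ρ : K, ρ ^ n = 1 →
      ((b (i + 1) : ℕ∞) ≤ PowerSeries.order (PowerSeries.rescale ρ ζ - ζ) ↔
        ρ ^ e i = 1) := by
    intro ρ hρn
    constructor
    · intro hord
      have hall : ∀ i', i' ≤ i → ρ ^ e i' = 1 := by
        intro i'
        induction i' with
        | zero => intro _; rw [he0]; exact hρn
        | succ i' ih =>
          intro hle
          rw [hgcd i' (by omega)]
          refine pow_gcd_eq_one (ih (by omega)) ?_
          have hblt : b (i' + 1) < b (i + 1) := hbmono i i' (by omega) hih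
          have h0 : PowerSeries.coeff (b (i' + 1))
              (PowerSeries.rescale ρ ζ - ζ) = 0 :=
            PowerSeries.coeff_of_lt_order _
              (lt_of_lt_of_le (by exact_mod_cast hblt) hord)
          rw [hcoeff] at h0
          have hc := (hbS i' (by omega)).1
          rcases mul_eq_zero.mp h0 with h1 | h1
          · exact sub_eq_zero.mp h1
          · exact absurd h1 hc
      exact hall i le_rfl
    · intro hei
      apply PowerSeries.nat_le_order
      intro k hk
      rw [hcoeff]
      by_cases hc : PowerSeries.coeff k ζ = 0
      · rw [hc, mul_zero]
      · have hdvd : e i ∣ k := by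
          by_contra hnd
          exact absurd (hble i hih k hc hnd) (by omega)
        obtain ⟨c, hc'⟩ := hdvd
        rw [hc', pow_mul, hei, one_pow, sub_self, zero_mul]
  have key2 : ∀ ρ : K, ρ ^ n = 1 →
      (PowerSeries.order (PowerSeries.rescale ρ ζ - ζ) = (b (i + 1) : ℕ∞) ↔
        (ρ ^ e i = 1 ∧ ρ ^ b (i + 1) ≠ 1)) := by
    intro ρ hρn
    constructor
    · intro hord
      have hge : (b (i + 1) : ℕ∞) ≤
          PowerSeries.order (PowerSeries.rescale ρ ζ - ζ) := le_of_eq hord.symm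
      refine ⟨(key ρ hρn).mp hge, ?_⟩
      have hne : PowerSeries.coeff (b (i + 1))
          (PowerSeries.rescale ρ ζ - ζ) ≠ 0 :=
        (PowerSeries.order_eq.mp hord).1 (b (i + 1)) rfl
      rw [hcoeff] at hne
      intro h1
      exact hne (by rw [h1, sub_self, zero_mul])
    · rintro ⟨h1, h2⟩
      have hge := (key ρ hρn).mpr h1
      have hle : PowerSeries.order (PowerSeries.rescale ρ ζ - ζ) ≤
          (b (i + 1) : ℕ∞) := by
        apply PowerSeries.order_le
        rw [hcoeff]
        exact mul_ne_zero (sub_ne_zero.mpr h2) (hbS i hih).1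
      exact le_antisymm hle hge
  have hρn_of : ∀ ρ : K, ρ ^ e i = 1 → ρ ^ n = 1 := by
    intro ρ h1
    obtain ⟨c, hc⟩ := hedvd i hih.le
    rw [hc, pow_mul, h1, one_pow]
  have hsetA : {ρ : K | ρ ^ n = 1 ∧
      (b (i + 1) : ℕ∞) ≤ PowerSeries.order (PowerSeries.rescale ρ ζ - ζ)} =
      {ρ : K | ρ ^ e i = 1} := by
    ext ρ
    simp only [Set.mem_setOf_eq]
    constructor
    · rintro ⟨h1, h2⟩
      exact (key ρ h1).mp h2
    · intro h1
      exact ⟨hρn_of ρ h1, (key ρ (hρn_of ρ h1)).mpr h1⟩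
  have hsetB : {ρ : K | ρ ^ n = 1 ∧
      PowerSeries.order (PowerSeries.rescale ρ ζ - ζ) = (b (i + 1) : ℕ∞)} =
      {ρ : K | ρ ^ e i = 1} \ {ρ : K | ρ ^ e (i + 1) = 1} := by
    ext ρ
    simp only [Set.mem_setOf_eq, Set.mem_diff]
    constructor
    · rintro ⟨h1, h2⟩
      obtain ⟨ha, hb'⟩ := (key2 ρ h1).mp h2
      refine ⟨ha, fun hcon => hb' ?_⟩
      obtain ⟨c, hc⟩ := hedvdb i hih
      rw [hc, pow_mul, hcon, one_pow]
    · rintro ⟨ha, hb'⟩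
      have hbne : ρ ^ b (i + 1) ≠ 1 := by
        intro hcon
        exact hb' (by rw [hgcd i hih]; exact pow_gcd_eq_one ha hcon)
      exact ⟨hρn_of ρ ha, (key2 ρ (hρn_of ρ ha)).mpr ⟨ha, hbne⟩⟩
  have hsub : {ρ : K | ρ ^ e (i + 1) = 1} ⊆ {ρ : K | ρ ^ e i = 1} := by
    intro ρ h1
    obtain ⟨c, hc⟩ := hedvde i hih
    simp only [Set.mem_setOf_eq] at h1 ⊢
    rw [hc, pow_mul, h1, one_pow]
  simp only [Nat.add_sub_cancel]
  constructor
  · rw [hsetA]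
    exact card_rootsOfUnity' K p (hepos i hih.le)
  · rw [hsetB, Set.ncard_diff hsub (finite_setOf_pow_eq_one K (hepos (i + 1) hih)),
      card_rootsOfUnity' K p (hepos i hih.le),
      card_rootsOfUnity' K p (hepos (i + 1) hih)]

end PaperStmt
end
end

section
/- Let K be an algebraically closed field of characteristic p > 0. Let n, m be positive integers and let ζ, η ∈ K[[t]] be nonzero power series satisfying the minimality condition with respect to n and to m respectively. Let f and g be distinct monic polynomials with coefficients in K[[x]] of degrees n and m with f(t^n, ζ(t)) = 0 and g(t^m, η(t)) = 0. Let N := lcm(n,m), set D(ρ) := ord_s( (rescale_ρ ζ)(s^{N/n}) − η(s^{N/m}) ) for ρ ∈ U_n, and let α := (1/N)·max{ ord_s( (rescale_ρ ζ)(s^{N/n}) − (rescale_σ η)(s^{N/m}) ) : ρ ∈ U_n, σ ∈ U_m } be the order of coincidence of the two branches (a finite positive rational). Let b_j, e_j be the characteristic data of ζ with respect to n and let r be the unique index with b_r/n < α ≤ b_{r+1}/n. Then: (a) for every j ∈ {1,…,r}, the number of ρ ∈ U_n with D(ρ) = N·b_j/n equals e_{j−1}[:p] − e_j[:p]; (b)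 the number of ρ ∈ U_n with D(ρ) = N·α equals e_r[:p]. -/
open scoped Classical

noncomputable section

namespace PaperStmt

section Aux

variable {K : Type*} [Field K]

lemma coeff_expandPS (c j : ℕ) (φ : PowerSeries K) :
    PowerSeries.coeff j (expandPS K c φ) =
      if c ∣ j then PowerSeries.coeff (j / c) φ else 0 := by
  simp [expandPS]

lemma expandPS_sub (c : ℕ) (φ ψ : PowerSeries K) :
    expandPS K c (φ - ψ) = expandPS K c φ - expandPS K c ψ := by
  ext j
  simp only [map_sub, coeff_expandPS]
  split <;> simp

lemma rescale_expandPS (c : ℕ) (τ : K) (φ : PowerSeries K) :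
    PowerSeries.rescale τ (expandPS K c φ) = expandPS K c (PowerSeries.rescale (τ ^ c) φ) := by
  ext j
  rw [PowerSeries.coeff_rescale, coeff_expandPS, coeff_expandPS]
  split
  · rw [PowerSeries.coeff_rescale, ← pow_mul, Nat.mul_div_cancel' ‹c ∣ j›]
  · rw [mul_zero]

lemma order_expandPS {c : ℕ} (hc : 0 < c) {φ : PowerSeries K} {w : ℕ}
    (hw : φ.order = w) : (expandPS K c φ).order = (c * w : ℕ) := by
  rw [PowerSeries.order_eq_nat] at hw ⊢
  refine ⟨?_, ?_⟩
  · rw [coeff_expandPS, if_pos (Dvd.intro w rfl), Nat.mul_div_cancel_left w hc]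
    exact hw.1
  · intro i hi
    rw [coeff_expandPS]
    split
    · apply hw.2
      obtain ⟨k, rfl⟩ := ‹c ∣ i›
      rw [Nat.mul_div_cancel_left k hc]
      exact lt_of_mul_lt_mul_left hi (Nat.zero_le c)
    · rfl

lemma order_rescale {τ : K} (hτ : τ ≠ 0) (φ : PowerSeries K) :
    (PowerSeries.rescale τ φ).order = φ.order := by
  rw [PowerSeries.order_eq]
  constructor
  · intro i hi
    rw [PowerSeries.coeff_rescale]
    exact mul_ne_zero (pow_ne_zero _ hτ) (PowerSeries.order_eq_nat.mp hi.symm).1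
  · intro i hi
    rw [PowerSeries.coeff_rescale, PowerSeries.coeff_of_lt_order i hi, mul_zero]

lemma pow_p_pow_eq_one_iff {p : ℕ} [Fact p.Prime] [CharP K p] (v : ℕ) (y : K) :
    y ^ p ^ v = 1 ↔ y = 1 := by
  induction v with
  | zero => simp
  | succ v ih =>
    rw [← ih]
    constructor
    · intro hy
      have hp : (y ^ p ^ v) ^ p = (1 : K) ^ p := by
        rw [one_pow, ← pow_mul, ← pow_succ]
        exact hy
      have := frobenius_inj K p (a₁ := y ^ p ^ v) (a₂ := 1)
      simp only [frobenius_def] at this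
      simpa using this (by simpa using hp)
    · intro hy
      rw [pow_succ, pow_mul, hy, one_pow]

lemma coprimePart_eq_ordCompl (p n : ℕ) [hp : Fact p.Prime] :
    coprimePart p n = n / p ^ n.factorization p := by
  rw [coprimePart, Nat.factorization_def _ hp.out]

lemma coprimePart_pos (p : ℕ) [Fact p.Prime] {d : ℕ} (hd : 0 < d) :
    0 < coprimePart p d := by
  rw [coprimePart_eq_ordCompl]
  exact Nat.ordCompl_pos p hd.ne'

lemma not_dvd_coprimePart (p : ℕ) [hp : Fact p.Prime] {d : ℕ} (hd : 0 < d) :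
    ¬ p ∣ coprimePart p d := by
  rw [coprimePart_eq_ordCompl]
  exact Nat.not_dvd_ordCompl hp.out hd.ne'

lemma coprimePart_mul_eq (p : ℕ) [hp : Fact p.Prime] (d : ℕ) :
    p ^ (d.factorization p) * coprimePart p d = d := by
  rw [coprimePart_eq_ordCompl]
  exact Nat.ordProj_mul_ordCompl_eq_self d p

lemma pow_eq_one_iff_coprimePart (p : ℕ) [Fact p.Prime] [CharP K p] (d : ℕ) (x : K) :
    x ^ d = 1 ↔ x ^ coprimePart p d = 1 := by
  conv_lhs => rw [← coprimePart_mul_eq p d, mul_comm, pow_mul]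
  exact pow_p_pow_eq_one_iff _ _

lemma finite_pow_eq_one {d : ℕ} (hd : 0 < d) : {x : K | x ^ d = 1}.Finite := by
  apply Set.Finite.subset ((Polynomial.X ^ d - Polynomial.C (1 : K)).roots.toFinset.finite_toSet)
  intro x hx
  simp only [Finset.coe_sort_coe, Multiset.mem_toFinset, Finset.mem_coe]
  rw [Polynomial.mem_roots (Polynomial.X_pow_sub_C_ne_zero hd 1)]
  simp only [Polynomial.IsRoot, Polynomial.eval_sub, Polynomial.eval_pow, Polynomial.eval_X,
    Polynomial.eval_C, sub_eq_zero]
  exact hx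

lemma ncard_pow_eq_one (p : ℕ) [Fact p.Prime] [CharP K p] [IsAlgClosed K] {d : ℕ}
    (hd : 0 < d) : Set.ncard {x : K | x ^ d = 1} = coprimePart p d := by
  set d' := coprimePart p d with hd'def
  have hd'pos : 0 < d' := coprimePart_pos p hd
  have hcast : (d' : K) ≠ 0 := by
    rw [Ne, CharP.cast_eq_zero_iff K p]
    exact not_dvd_coprimePart p hd
  have hsep : (Polynomial.X ^ d' - Polynomial.C (1 : K)).Separable :=
    Polynomial.separable_X_pow_sub_C 1 hcast one_ne_zero
  have hsp := (Polynomial.splits_iff_card_roots).mp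
    (IsAlgClosed.splits (Polynomial.X ^ d' - Polynomial.C (1 : K)))
  have hset : {x : K | x ^ d = 1} =
      ↑((Polynomial.X ^ d' - Polynomial.C (1 : K)).roots.toFinset) := by
    ext x
    simp only [Set.mem_setOf_eq, Finset.coe_sort_coe, Multiset.mem_toFinset, Finset.mem_coe]
    rw [Polynomial.mem_roots (Polynomial.X_pow_sub_C_ne_zero hd'pos 1)]
    simp only [Polynomial.IsRoot, Polynomial.eval_sub, Polynomial.eval_pow, Polynomial.eval_X,
      Polynomial.eval_C, sub_eq_zero]
    exact pow_eq_one_iff_coprimePart p d x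
  rw [hset, Set.ncard_coe_finset, Multiset.toFinset_card_of_nodup (Polynomial.nodup_roots hsep),
    hsp, Polynomial.natDegree_X_pow_sub_C]

lemma order_rescale_sub (ζ : PowerSeries K) {ρ σ x : K} (hσ : σ ≠ 0) (hx : ρ = σ * x)
    {w : ℕ} (hw : IsLeast {k : ℕ | PowerSeries.coeff k ζ ≠ 0 ∧ x ^ k ≠ 1} w) :
    (PowerSeries.rescale ρ ζ - PowerSeries.rescale σ ζ).order = w := by
  have key : ∀ k : ℕ, PowerSeries.coeff k (PowerSeries.rescale ρ ζ - PowerSeries.rescale σ ζ)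
      = σ ^ k * (x ^ k - 1) * PowerSeries.coeff k ζ := by
    intro k
    rw [map_sub, PowerSeries.coeff_rescale, PowerSeries.coeff_rescale, hx, mul_pow]
    ring
  rw [PowerSeries.order_eq_nat]
  constructor
  · rw [key]
    exact mul_ne_zero (mul_ne_zero (pow_ne_zero _ hσ) (sub_ne_zero.mpr hw.1.2)) hw.1.1
  · intro i hi
    rw [key]
    by_cases h1 : PowerSeries.coeff i ζ = 0
    · rw [h1, mul_zero]
    · by_cases h2 : x ^ i = 1
      · rw [h2, sub_self, mul_zero, zero_mul]
      · exact absurd (hw.2 ⟨h1, h2⟩) (not_le.mpr hi)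

section CD

variable {n h : ℕ} {ζ : PowerSeries K} {b e : ℕ → ℕ}

lemma cd_epos (hcd : CharData K n ζ h b e) (hn : 0 < n) : ∀ j, j ≤ h → 0 < e j := by
  intro j
  induction j with
  | zero => intro _; rw [hcd.1]; exact hn
  | succ j ih =>
    intro hj
    rw [hcd.2.2.2.2.2 j (by omega)]
    exact Nat.gcd_pos_of_pos_left _ (ih (by omega))

lemma cd_e_dvd (hcd : CharData K n ζ h b e) {j : ℕ} (hj : j < h) : e (j + 1) ∣ e j := by
  rw [hcd.2.2.2.2.2 j hj]
  exact Nat.gcd_dvd_left _ _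

lemma cd_e_dvd_n (hcd : CharData K n ζ h b e) : ∀ j, j ≤ h → e j ∣ n := by
  intro j
  induction j with
  | zero => intro _; rw [hcd.1]
  | succ j ih =>
    intro hj
    exact (cd_e_dvd hcd (by omega)).trans (ih (by omega))

lemma cd_dvd_of_lt (hcd : CharData K n ζ h b e) {j k : ℕ} (hj : j < h)
    (hk : PowerSeries.coeff k ζ ≠ 0) (hlt : k < b (j + 1)) : e j ∣ k := by
  by_contra hnd
  exact absurd ((hcd.2.2.2.2.1 j hj).2 ⟨hk, hnd⟩) (not_le.mpr hlt)

lemma cd_e_dvd_b (hcd : CharData K n ζ h b e) {j : ℕ} (hj1 : 1 ≤ j) (hj : j ≤ h) :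
    e j ∣ b j := by
  obtain ⟨i, rfl⟩ : ∃ i, j = i + 1 := ⟨j - 1, by omega⟩
  rw [hcd.2.2.2.2.2 i (by omega)]
  exact Nat.gcd_dvd_right _ _

lemma cd_b_mem (hcd : CharData K n ζ h b e) {j : ℕ} (hj1 : 1 ≤ j) (hj : j ≤ h) :
    PowerSeries.coeff (b j) ζ ≠ 0 := by
  obtain ⟨i, rfl⟩ : ∃ i, j = i + 1 := ⟨j - 1, by omega⟩
  exact (hcd.2.2.2.2.1 i (by omega)).1.1

lemma cd_b_succ_lt (hcd : CharData K n ζ h b e) {j : ℕ} (hj1 : 1 ≤ j) (hj : j < h) :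
    b j < b (j + 1) := by
  obtain ⟨i, rfl⟩ : ∃ i, j = i + 1 := ⟨j - 1, by omega⟩
  have hnd : ¬ e (i + 1) ∣ b (i + 2) := (hcd.2.2.2.2.1 (i + 1) hj).1.2
  have hnd' : ¬ e i ∣ b (i + 2) := by
    intro hdvd
    exact hnd ((cd_e_dvd hcd (by omega)).trans hdvd)
  have hle : b (i + 1) ≤ b (i + 2) :=
    (hcd.2.2.2.2.1 i (by omega)).2 ⟨(hcd.2.2.2.2.1 (i + 1) hj).1.1, hnd'⟩
  have hne : b (i + 1) ≠ b (i + 2) := by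
    intro hh
    exact hnd (hh ▸ cd_e_dvd_b hcd (by omega) (by omega))
  exact lt_of_le_of_ne hle hne

lemma cd_b_lt (hcd : CharData K n ζ h b e) {i j : ℕ} (hi : 1 ≤ i) (hij : i < j)
    (hj : j ≤ h) : b i < b j := by
  induction j with
  | zero => omega
  | succ j ih =>
    rcases Nat.lt_or_ge i j with hlt | hge
    · exact lt_trans (ih hlt (by omega)) (cd_b_succ_lt hcd (by omega) (by omega))
    · have : i = j := by omega
      subst this
      exact cd_b_succ_lt hcd hi (by omega)

lemma cd_pow_e (hcd : CharData K n ζ h b e) {x : K} (hxn : x ^ n = 1) {j : ℕ}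
    (hj : j ≤ h) (hb : ∀ i, 1 ≤ i → i ≤ j → x ^ b i = 1) : x ^ e j = 1 := by
  induction j with
  | zero => rw [hcd.1]; exact hxn
  | succ j ih =>
    rw [hcd.2.2.2.2.2 j (by omega), ← orderOf_dvd_iff_pow_eq_one]
    exact Nat.dvd_gcd
      (orderOf_dvd_of_pow_eq_one (ih (by omega) (fun i h1 h2 => hb i h1 (by omega))))
      (orderOf_dvd_of_pow_eq_one (hb (j + 1) (by omega) le_rfl))

end CD

end Aux

/-- counting lemma for two branches, characteristic `p > 0`.
With `D(ρ) = ord_s( (ζ(ρ·))(s^{N/n}) − η(s^{N/m}) )`: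
(a) for `1 ≤ j ≤ r`, the number of `n`-th roots of unity `ρ` with
`D(ρ) = N·b_j/n` equals `e_{j−1}[:p] − e_j[:p]`;
(b) the number of those with `D(ρ) = N·α` equals `e_r[:p]`. -/
theorem statement14
    (K : Type*) [Field K] [IsAlgClosed K]
    (p : ℕ) [Fact p.Prime] [CharP K p]
    (n m : ℕ) (hn : 0 < n) (hm : 0 < m)
    (ζ η : PowerSeries K) (hζ : ζ ≠ 0) (hη : η ≠ 0)
    (hminζ : MinimalDenom K n ζ) (hminη : MinimalDenom K m η)
    (f g : Polynomial (PowerSeries K))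
    (hfmonic : f.Monic) (hgmonic : g.Monic)
    (hfdeg : f.natDegree = n) (hgdeg : g.natDegree = m)
    (hfroot : IsNPRoot K n f ζ) (hgroot : IsNPRoot K m g η)
    (hfg : f ≠ g)
    (N : ℕ) (hN : N = Nat.lcm n m)
    -- `N·α` is the (finite, positive) maximum of the orders of the differences of
    -- the rescaled and expanded Newton–Puiseux roots of `f` and `g`:
    (a : ℕ) (ha : 0 < a)
    (hmax : IsGreatest
      {o : ℕ∞ | ∃ ρ σ : K, ρ ^ n = 1 ∧ σ ^ m = 1 ∧
        PowerSeries.order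
          (expandPS K (N / n) (PowerSeries.rescale ρ ζ) -
            expandPS K (N / m) (PowerSeries.rescale σ η)) = o}
      (a : ℕ∞))
    (α : ℚ) (hα : α = (a : ℚ) / (N : ℚ))
    -- characteristic data of `ζ` with respect to `n`:
    (h : ℕ) (b e : ℕ → ℕ) (hcd : CharData K n ζ h b e)
    -- `r` is the (unique) index such that `b r / n < α ≤ b (r+1) / n`
    -- (the right-hand inequality being vacuous for `r = h` since `b (h+1) = ∞`):
    (r : ℕ) (hrh : r ≤ h)
    (hrlt : ((b r : ℚ) / (n : ℚ)) < α)
    (hrle : r < h → α ≤ ((b (r + 1) : ℚ) / (n : ℚ))) :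
    (∀ j, 1 ≤ j → j ≤ r →
      Set.ncard {ρ : K | ρ ^ n = 1 ∧
          PowerSeries.order
            (expandPS K (N / n) (PowerSeries.rescale ρ ζ) - expandPS K (N / m) η) =
          ((N / n * b j : ℕ) : ℕ∞)} =
        coprimePart p (e (j - 1)) - coprimePart p (e j)) ∧
    Set.ncard {ρ : K | ρ ^ n = 1 ∧
        PowerSeries.order
          (expandPS K (N / n) (PowerSeries.rescale ρ ζ) - expandPS K (N / m) η) =
        (a : ℕ∞)} =
      coprimePart p (e r) := by
  classical
  have hN0 : 0 < N := by
    rw [hN]; exact Nat.pos_of_ne_zero (Nat.lcm_ne_zero hn.ne' hm.ne')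
  have hnN : n ∣ N := hN ▸ Nat.dvd_lcm_left n m
  have hmN : m ∣ N := hN ▸ Nat.dvd_lcm_right n m
  set c := N / n with hcdef
  have hcn : c * n = N := Nat.div_mul_cancel hnN
  have hc0 : 0 < c := Nat.div_pos (Nat.le_of_dvd hN0 hnN) hn
  set d := N / m with hddef
  have hdm : d * m = N := Nat.div_mul_cancel hmN
  have hd0 : 0 < d := Nat.div_pos (Nat.le_of_dvd hN0 hmN) hm
  -- translate the rational inequalities into natural-number ones
  have hrlt' : N * b r < n * a := by
    rw [hα, div_lt_div_iff₀ (by exact_mod_cast hn) (by exact_mod_cast hN0)] at hrlt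
    have h2 : ((N * b r : ℕ) : ℚ) < ((n * a : ℕ) : ℚ) := by push_cast; nlinarith
    exact_mod_cast h2
  have hrle' : r < h → n * a ≤ N * b (r + 1) := by
    intro hr
    have h1 := hrle hr
    rw [hα, div_le_div_iff₀ (by exact_mod_cast hN0) (by exact_mod_cast hn)] at h1
    have h2 : ((n * a : ℕ) : ℚ) ≤ ((N * b (r + 1) : ℕ) : ℚ) := by push_cast; nlinarith
    exact_mod_cast h2
  have harith : ∀ k : ℕ, c * k < a ↔ N * k < n * a := by
    intro k
    have h1 : c * k * n = N * k := by rw [← hcn]; ring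
    constructor
    · intro hh
      calc N * k = c * k * n := h1.symm
        _ < a * n := by exact mul_lt_mul_of_pos_right hh hn
        _ = n * a := Nat.mul_comm a n
    · intro hh
      by_contra hcon
      push_neg at hcon
      have h3 : n * a ≤ N * k := by
        calc n * a = a * n := Nat.mul_comm n a
          _ ≤ c * k * n := Nat.mul_le_mul_right n hcon
          _ = N * k := h1
      omega
  -- Step 1: find ρ₁ with D(ρ₁) = a
  obtain ⟨⟨ρ₀, σ₀, hρ₀, hσ₀, hord₀⟩, hub⟩ := hmax
  have hσ₀ne : σ₀ ≠ 0 := by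
    intro hh; rw [hh, zero_pow hm.ne'] at hσ₀; exact zero_ne_one hσ₀
  obtain ⟨τ, hτ⟩ := IsAlgClosed.exists_pow_nat_eq (σ₀⁻¹) hd0
  have hτN : τ ^ N = 1 := by
    rw [← hdm, pow_mul, hτ, inv_pow, hσ₀, inv_one]
  have hτne : τ ≠ 0 := by
    intro hh
    rw [hh, zero_pow hd0.ne'] at hτ
    exact (inv_ne_zero hσ₀ne) hτ.symm
  set ρ₁ : K := τ ^ c * ρ₀ with hρ₁def
  have hρ₁ : ρ₁ ^ n = 1 := by
    rw [hρ₁def, mul_pow, hρ₀, mul_one, ← pow_mul, hcn, hτN]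
  have hρ₁ne : ρ₁ ≠ 0 := by
    intro hh; rw [hh, zero_pow hn.ne'] at hρ₁; exact zero_ne_one hρ₁
  have hD1 : (expandPS K c (PowerSeries.rescale ρ₁ ζ) - expandPS K d η).order = (a : ℕ∞) := by
    have e1 : PowerSeries.rescale τ
        (expandPS K c (PowerSeries.rescale ρ₀ ζ) - expandPS K d (PowerSeries.rescale σ₀ η))
        = expandPS K c (PowerSeries.rescale ρ₁ ζ) - expandPS K d η := by
      rw [map_sub, rescale_expandPS, rescale_expandPS, PowerSeries.rescale_rescale,
        PowerSeries.rescale_rescale, hτ, mul_inv_cancel₀ hσ₀ne, PowerSeries.rescale_one,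
        RingHom.id_apply, mul_comm ρ₀ (τ ^ c), ← hρ₁def]
    rw [← e1, order_rescale hτne, hord₀]
  have hubρ : ∀ ρ : K, ρ ^ n = 1 →
      (expandPS K c (PowerSeries.rescale ρ ζ) - expandPS K d η).order ≤ (a : ℕ∞) := by
    intro ρ hρ
    exact hub ⟨ρ, 1, hρ, one_pow m, by rw [PowerSeries.rescale_one, RingHom.id_apply]⟩
  -- minimality: an n-th root of unity fixing the whole support is 1
  have hxone : ∀ x : K, x ^ n = 1 → (∀ k, PowerSeries.coeff k ζ ≠ 0 → x ^ k = 1) → x = 1 := by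
    intro x hxn hall
    have h1 : orderOf x ∣ n := orderOf_dvd_iff_pow_eq_one.mpr hxn
    have h2 : orderOf x = 1 :=
      hminζ (orderOf x) h1 (fun j hj => orderOf_dvd_iff_pow_eq_one.mpr (hall j hj))
    exact orderOf_eq_one_iff.mp h2
  have hwex : ∀ x : K, x ^ n = 1 → x ≠ 1 →
      ∃ w, IsLeast {k : ℕ | PowerSeries.coeff k ζ ≠ 0 ∧ x ^ k ≠ 1} w := by
    intro x hxn hx1
    have hne : ∃ k, PowerSeries.coeff k ζ ≠ 0 ∧ x ^ k ≠ 1 := by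
      by_contra hcon
      push_neg at hcon
      exact hx1 (hxone x hxn hcon)
    exact ⟨Nat.find hne, Nat.find_spec hne, fun y hy => Nat.find_min' hne hy⟩
  -- Step 2: the order of D(ρ₁ x) in terms of the least support element moved by x
  have key : ∀ x : K, (ρ₁ * x) ^ n = 1 → ∀ w : ℕ,
      IsLeast {k : ℕ | PowerSeries.coeff k ζ ≠ 0 ∧ x ^ k ≠ 1} w →
      (expandPS K c (PowerSeries.rescale (ρ₁ * x) ζ) - expandPS K d η).order
        = if c * w < a then ((c * w : ℕ) : ℕ∞) else (a : ℕ∞) := by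
    intro x hρn w hw
    have hAB : (expandPS K c (PowerSeries.rescale (ρ₁ * x) ζ)
        - expandPS K c (PowerSeries.rescale ρ₁ ζ)).order = ((c * w : ℕ) : ℕ∞) := by
      rw [← expandPS_sub]
      exact order_expandPS hc0 (order_rescale_sub ζ hρ₁ne rfl hw)
    have hdecomp : expandPS K c (PowerSeries.rescale (ρ₁ * x) ζ) - expandPS K d η
        = (expandPS K c (PowerSeries.rescale (ρ₁ * x) ζ)
            - expandPS K c (PowerSeries.rescale ρ₁ ζ))
          + (expandPS K c (PowerSeries.rescale ρ₁ ζ) - expandPS K d η) := by ring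
    by_cases hlt : c * w < a
    · rw [if_pos hlt, hdecomp,
        PowerSeries.order_add_of_order_ne _ _ (by rw [hAB, hD1]; exact_mod_cast hlt.ne),
        hAB, hD1]
      exact min_eq_left (by exact_mod_cast hlt.le)
    · rw [if_neg hlt]
      refine le_antisymm (hubρ _ hρn) ?_
      have hmin := PowerSeries.min_order_le_order_add
        (expandPS K c (PowerSeries.rescale (ρ₁ * x) ζ)
          - expandPS K c (PowerSeries.rescale ρ₁ ζ))
        (expandPS K c (PowerSeries.rescale ρ₁ ζ) - expandPS K d η)
      rw [hAB, hD1, ← hdecomp] at hmin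
      refine le_trans ?_ hmin
      simp only [le_min_iff, le_refl, and_true]
      exact_mod_cast not_lt.mp hlt
  have hepos := cd_epos hcd hn
  have hbra : c * b r < a := (harith _).mpr hrlt'
  -- the set for part (b)
  have hsetb : {ρ : K | ρ ^ n = 1 ∧
      (expandPS K c (PowerSeries.rescale ρ ζ) - expandPS K d η).order = (a : ℕ∞)}
      = (fun x => ρ₁ * x) '' {x : K | x ^ e r = 1} := by
    ext ρ
    simp only [Set.mem_setOf_eq, Set.mem_image]
    constructor
    · rintro ⟨hρ, hD⟩
      have hρeq : ρ = ρ₁ * (ρ₁⁻¹ * ρ) := by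
        rw [← mul_assoc, mul_inv_cancel₀ hρ₁ne, one_mul]
      refine ⟨ρ₁⁻¹ * ρ, ?_, hρeq.symm⟩
      set x := ρ₁⁻¹ * ρ with hxdef
      have hxn : x ^ n = 1 := by
        rw [hxdef, mul_pow, inv_pow, hρ₁, hρ, inv_one, one_mul]
      by_cases hx1 : x = 1
      · rw [hx1, one_pow]
      · obtain ⟨w, hw⟩ := hwex x hxn hx1
        have horder := key x (by rw [← hρeq]; exact hρ) w hw
        rw [← hρeq] at horder
        have hge : ¬ c * w < a := by
          intro hlt
          rw [hD, if_pos hlt] at horder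
          have h5 : a = c * w := by exact_mod_cast horder
          omega
        refine cd_pow_e hcd hxn hrh ?_
        intro i hi1 hir
        by_contra hbne
        have hwle : w ≤ b i := hw.2 ⟨cd_b_mem hcd hi1 (le_trans hir hrh), hbne⟩
        have hbile : b i ≤ b r := by
          rcases Nat.lt_or_ge i r with hlt' | hge'
          · exact le_of_lt (cd_b_lt hcd hi1 hlt' hrh)
          · rw [le_antisymm hir hge']
        exact hge (lt_of_le_of_lt (Nat.mul_le_mul_left c (le_trans hwle hbile)) hbra)
    · rintro ⟨x, hx, rfl⟩
      have hxn : x ^ n = 1 := by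
        obtain ⟨k, hk⟩ := cd_e_dvd_n hcd r hrh
        rw [hk, pow_mul, hx, one_pow]
      have hρn : (ρ₁ * x) ^ n = 1 := by rw [mul_pow, hρ₁, hxn, one_mul]
      refine ⟨hρn, ?_⟩
      by_cases hx1 : x = 1
      · rw [hx1, mul_one]; exact hD1
      · obtain ⟨w, hw⟩ := hwex x hxn hx1
        have horder := key x hρn w hw
        have hge : ¬ c * w < a := by
          intro hlt
          have hNa : N * w < n * a := (harith w).mp hlt
          rcases Nat.lt_or_ge r h with hrh' | hrh'' 
          · have hwlt : w < b (r + 1) := by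
              have h6 := lt_of_lt_of_le hNa (hrle' hrh')
              exact lt_of_mul_lt_mul_left h6 (Nat.zero_le N)
            obtain ⟨k, hk⟩ := cd_dvd_of_lt hcd hrh' hw.1.1 hwlt
            exact hw.1.2 (by rw [hk, pow_mul, hx, one_pow])
          · have hr : r = h := le_antisymm hrh hrh'' 
            have hxeq : x = 1 := by
              have h7 := hx
              rw [hr, hcd.2.2.2.1, pow_one] at h7
              exact h7
            exact hx1 hxeq
        rw [horder, if_neg hge]
  -- the sets for part (a)
  have hset_a : ∀ j, 1 ≤ j → j ≤ r →
      {ρ : K | ρ ^ n = 1 ∧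
        (expandPS K c (PowerSeries.rescale ρ ζ) - expandPS K d η).order
          = ((c * b j : ℕ) : ℕ∞)}
      = (fun x => ρ₁ * x) '' ({x : K | x ^ e (j - 1) = 1} \ {x : K | x ^ e j = 1}) := by
    intro j hj1 hjr
    have hjh : j ≤ h := le_trans hjr hrh
    have hcbj : c * b j < a := by
      have h8 : b j ≤ b r := by
        rcases Nat.lt_or_ge j r with hlt' | hge'
        · exact le_of_lt (cd_b_lt hcd hj1 hlt' hrh)
        · rw [le_antisymm hjr hge']
      exact lt_of_le_of_lt (Nat.mul_le_mul_left c h8) hbra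
    obtain ⟨i, rfl⟩ : ∃ i, j = i + 1 := ⟨j - 1, by omega⟩
    simp only [Nat.add_sub_cancel]
    ext ρ
    simp only [Set.mem_setOf_eq, Set.mem_image, Set.mem_diff]
    constructor
    · rintro ⟨hρ, hD⟩
      have hρeq : ρ = ρ₁ * (ρ₁⁻¹ * ρ) := by
        rw [← mul_assoc, mul_inv_cancel₀ hρ₁ne, one_mul]
      refine ⟨ρ₁⁻¹ * ρ, ?_, hρeq.symm⟩
      set x := ρ₁⁻¹ * ρ with hxdef
      have hxn : x ^ n = 1 := by
        rw [hxdef, mul_pow, inv_pow, hρ₁, hρ, inv_one, one_mul]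
      have hx1 : x ≠ 1 := by
        intro hh
        rw [hρeq, hh, mul_one] at hD
        have h9 := hD1.symm.trans hD
        have h10 : a = c * b (i + 1) := by exact_mod_cast h9
        omega
      obtain ⟨w, hw⟩ := hwex x hxn hx1
      have horder := key x (by rw [← hρeq]; exact hρ) w hw
      rw [← hρeq] at horder
      have hwlt : c * w < a := by
        by_contra hge
        rw [hD, if_neg hge] at horder
        have h11 : c * b (i + 1) = a := by exact_mod_cast horder
        omega
      rw [hD, if_pos hwlt] at horder
      have hweq : w = b (i + 1) := by
        have h12 : c * b (i + 1) = c * w := by exact_mod_cast horder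
        exact (Nat.eq_of_mul_eq_mul_left hc0 h12).symm
      constructor
      · refine cd_pow_e hcd hxn (by omega) ?_
        intro i' h1 h2
        by_contra hbne
        have h13 : w ≤ b i' := hw.2 ⟨cd_b_mem hcd h1 (by omega), hbne⟩
        have h14 : b i' < b (i + 1) := cd_b_lt hcd h1 (by omega) hjh
        omega
      · intro hxe
        obtain ⟨k, hk⟩ := cd_e_dvd_b hcd (Nat.le_add_left 1 i) hjh
        exact hw.1.2 (by rw [hweq, hk, pow_mul, hxe, one_pow])
    · rintro ⟨x, ⟨hxe1, hxe2⟩, rfl⟩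
      have hxn : x ^ n = 1 := by
        obtain ⟨k, hk⟩ := cd_e_dvd_n hcd i (by omega)
        rw [hk, pow_mul, hxe1, one_pow]
      have hρn : (ρ₁ * x) ^ n = 1 := by rw [mul_pow, hρ₁, hxn, one_mul]
      refine ⟨hρn, ?_⟩
      have hwleast : IsLeast {k : ℕ | PowerSeries.coeff k ζ ≠ 0 ∧ x ^ k ≠ 1} (b (i + 1)) := by
        constructor
        · refine ⟨cd_b_mem hcd (Nat.le_add_left 1 i) hjh, ?_⟩
          intro hh
          apply hxe2
          rw [← orderOf_dvd_iff_pow_eq_one] at hh hxe1 ⊢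
          rw [hcd.2.2.2.2.2 i (by omega)]
          exact Nat.dvd_gcd hxe1 hh
        · intro k hk
          by_contra hlt
          push_neg at hlt
          refine hk.2 ?_
          obtain ⟨k', hk'⟩ := cd_dvd_of_lt hcd (by omega) hk.1 hlt
          rw [hk', pow_mul, hxe1, one_pow]
      have horder := key x hρn _ hwleast
      rw [horder, if_pos hcbj]
  -- conclusion
  constructor
  · intro j hj1 hjr
    rw [hset_a j hj1 hjr,
      Set.ncard_image_of_injective _ (mul_right_injective₀ hρ₁ne)]
    have hjh : j ≤ h := le_trans hjr hrh
    have hsub : {x : K | x ^ e j = 1} ⊆ {x : K | x ^ e (j - 1) = 1} := by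
      intro x hx
      obtain ⟨i, rfl⟩ : ∃ i, j = i + 1 := ⟨j - 1, by omega⟩
      simp only [Nat.add_sub_cancel]
      obtain ⟨k, hk⟩ := cd_e_dvd hcd (show i < h by omega)
      simp only [Set.mem_setOf_eq] at hx ⊢
      rw [hk, pow_mul, hx, one_pow]
    rw [Set.ncard_diff hsub (finite_pow_eq_one (hepos j hjh)),
      ncard_pow_eq_one p (hepos (j - 1) (by omega)), ncard_pow_eq_one p (hepos j hjh)]
  · rw [hsetb, Set.ncard_image_of_injective _ (mul_right_injective₀ hρ₁ne),
      ncard_pow_eq_one p (hepos r hrh)]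


end PaperStmt
end
end
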